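/- Let w ∈ W̃_{D_m} and 0 ≤ k ≤ m. (i) w satisfies (SP1) at k if and only if w satisfies (SP1') at k. (ii) If the equivalent conditions in (i) hold, then w satisfies (SP2) at k if and only if w satisfies (SP2') at k. (iii) w satisfies (SP3) at k if and only if w satisfies (SP3') at k. -/

import Mathlib

open Finset

namespace TypeD

abbrev VecZ (m : ℕ) := Fin (2 * m) → ℤ
abbrev VecR (m : ℕ) := Fin (2 * m) → ℝ

/-- `σ ∈ S_{2m}^∘`: even, and commuting with `j ↦ j*`. -/
def InSO (m : ℕ) (σ : Equiv.Perm (Fin (2 * m))) : Prop :=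
  Equiv.Perm.sign σ = 1 ∧ ∀ j, σ j.rev = (σ j).rev

/-- `t ∈ X_{*D_m}`. -/
def InXD (m : ℕ) (t : VecZ m) : Prop :=
  ∀ j j' : Fin (2 * m), t j + t j.rev = t j' + t j'.rev

/-- `ω_i ∈ ℤ^{2m}`: writing `i = 2m·b + c` with `0 ≤ c < 2m`, the first `c` entries
are `-b-1` and the rest are `-b`. -/
def omegaD (m : ℕ) (i : ℤ) (j : Fin (2 * m)) : ℤ :=
  if ((j : ℕ) : ℤ) < i % (2 * (m : ℤ)) then -(i / (2 * (m : ℤ))) - 1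
  else -(i / (2 * (m : ℤ)))

/-- `μ_k^w = w·ω_k − ω_k` for `w = t_t σ`. -/
def muD (m : ℕ) (t : VecZ m) (σ : Equiv.Perm (Fin (2 * m))) (k : ℤ) (j : Fin (2 * m)) : ℤ :=
  t j + omegaD m k (σ⁻¹ j) - omegaD m k j

/-- `ν_k^w = (μ_k^w + μ_{−k}^w)/2`, real-valued. -/
noncomputable def nuD (m : ℕ) (t : VecZ m) (σ : Equiv.Perm (Fin (2 * m))) (k : ℤ) (j : Fin (2 * m)) : ℝ :=
  ((muD m t σ k j + muD m t σ (-k) j : ℤ) : ℝ) / 2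

/-- `c_k^w = #{j : μ_k^w(j) = 2}`. -/
noncomputable def cD (m : ℕ) (t : VecZ m) (σ : Equiv.Perm (Fin (2 * m))) (k : ℤ) : ℕ :=
  Set.ncard {j : Fin (2 * m) | muD m t σ k j = 2}

/-- the cocharacter `μ = (2^{(q)}, 1^{(2m−2q)}, 0^{(q)})`. -/
def muQ (m q : ℕ) (j : Fin (2 * m)) : ℤ :=
  if (j : ℕ) < q then 2 else if (j : ℕ) < 2 * m - q then 1 else 0

/-- the coroot lattice `Q∨_{D_m}`. -/
def QveeD (m : ℕ) : Set (VecZ m) :=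
  {x | (∀ j, x j + x j.rev = 0) ∧
    Even (∑ j ∈ Finset.univ.filter (fun j : Fin (2 * m) => (j : ℕ) < m), x j)}

/-- `j ∈ A_a` (1-indexed `{1,…,a} ∪ {2m+1−a,…,2m}`). -/
def memA (m a : ℕ) (j : Fin (2 * m)) : Prop := (j : ℕ) < a ∨ 2 * m - a ≤ (j : ℕ)

/-- `j ∈ B_a` (1-indexed `{a+1,…,2m−a}`). -/
def memB (m a : ℕ) (j : Fin (2 * m)) : Prop := a ≤ (j : ℕ) ∧ (j : ℕ) < 2 * m - a

def IsIntVal (x : ℝ) : Prop := ∃ z : ℤ, x = (z : ℝ)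

/-- a half-integer: an element of `(1/2)ℤ ∖ ℤ`. -/
def IsHalfInt (x : ℝ) : Prop := (∃ z : ℤ, x = (z : ℝ) / 2) ∧ ¬ IsIntVal x

/-- `μ_k^w` is self-dual, i.e. `μ_k^w = μ_{−k}^w`. -/
def SelfDual (m : ℕ) (t : VecZ m) (σ : Equiv.Perm (Fin (2 * m))) (k : ℤ) : Prop :=
  ∀ j, muD m t σ k j = muD m t σ (-k) j

/-- (SP1) at `k`. -/
def SP1 (m : ℕ) (t : VecZ m) (σ : Equiv.Perm (Fin (2 * m))) (k : ℤ) : Prop :=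
  (∀ j, muD m t σ k j + muD m t σ (-k) j.rev = 2) ∧
  (∀ j, 0 ≤ muD m t σ k j ∧ muD m t σ k j ≤ 2)

/-- (SP2) at `k`. -/
def SP2 (m q : ℕ) (t : VecZ m) (σ : Equiv.Perm (Fin (2 * m))) (k : ℤ) : Prop :=
  cD m t σ k ≤ q

/-- (SP3) at `k`. -/
def SP3 (m q : ℕ) (t : VecZ m) (σ : Equiv.Perm (Fin (2 * m))) (k : ℕ) : Prop :=
  (SelfDual m t σ (k : ℤ) ∧ (fun j => muD m t σ (k : ℤ) j - muQ m q j) ∉ QveeD m) →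
    ∃ j₁ j₂ : Fin (2 * m), memA m k j₁ ∧ memB m k j₂ ∧
      muD m t σ (k : ℤ) j₁ = 1 ∧ muD m t σ (k : ℤ) j₂ = 1

/-- (SP1') at `k`. -/
def SP1' (m : ℕ) (t : VecZ m) (σ : Equiv.Perm (Fin (2 * m))) (k : ℤ) : Prop :=
  (∀ j, nuD m t σ k j + nuD m t σ k j.rev = 2) ∧
  (∀ j, 0 ≤ nuD m t σ k j ∧ nuD m t σ k j ≤ 2)

/-- (SP2') at `k`. -/
def SP2' (m q : ℕ) (t : VecZ m) (σ : Equiv.Perm (Fin (2 * m))) (k : ℤ) : Prop :=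
  (Set.ncard {j : Fin (2 * m) | nuD m t σ k j = 2} : ℝ) +
    (Set.ncard {j : Fin (2 * m) | ¬ IsIntVal (nuD m t σ k j)} : ℝ) / 4 ≤ (q : ℝ)

/-- `ν_k^w − μ ∈ Q∨_{D_m}`. -/
def NuCongQvee (m q : ℕ) (t : VecZ m) (σ : Equiv.Perm (Fin (2 * m))) (k : ℤ) : Prop :=
  ∃ y ∈ QveeD m, ∀ j, nuD m t σ k j = ((muQ m q j + y j : ℤ) : ℝ)

/-- (SP3') at `k`. -/
def SP3' (m q : ℕ) (t : VecZ m) (σ : Equiv.Perm (Fin (2 * m))) (k : ℕ) : Prop :=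
  ((∀ j, IsIntVal (nuD m t σ (k : ℤ) j)) ∧ ¬ NuCongQvee m q t σ (k : ℤ)) →
    ∃ j₁ j₂ : Fin (2 * m), memA m k j₁ ∧ memB m k j₂ ∧
      nuD m t σ (k : ℤ) j₁ = 1 ∧ nuD m t σ (k : ℤ) j₂ = 1

/-- the orbit `S_{2m}^∘ · μ` inside `ℝ^{2m}`. -/
def OrbitMu (m q : ℕ) : Set (VecR m) :=
  {x | ∃ σ : Equiv.Perm (Fin (2 * m)), InSO m σ ∧ ∀ j, x j = ((muQ m q (σ⁻¹ j) : ℤ) : ℝ)}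

/-- `Conv(S_{2m}^∘ · μ)`. -/
def ConvMu (m q : ℕ) : Set (VecR m) := convexHull ℝ (OrbitMu m q)

/-- the affine action of `w = t_t σ` on `ℝ^{2m}`. -/
noncomputable def actR (m : ℕ) (t : VecZ m) (σ : Equiv.Perm (Fin (2 * m))) (x : VecR m) (j : Fin (2 * m)) : ℝ :=
  (t j : ℝ) + x (σ⁻¹ j)

/-- the point `a_k = ((−1/2)^{(k)}, 0^{(2m−2k)}, (1/2)^{(k)})`. -/
noncomputable def aD (m k : ℕ) (j : Fin (2 * m)) : ℝ :=
  if (j : ℕ) < k then -(1 / 2) else if (j : ℕ) < 2 * m - k then 0 else 1 / 2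

/-- the point `a_{0'} = (−1, 0^{(2m−2)}, 1)`. -/
noncomputable def a0' (m : ℕ) (j : Fin (2 * m)) : ℝ :=
  if (j : ℕ) = 0 then -1 else if (j : ℕ) = 2 * m - 1 then 1 else 0

/-- the point `a_{m'} = ((−1/2)^{(m−1)}, 1/2, −1/2, (1/2)^{(m−1)})`. -/
noncomputable def am' (m : ℕ) (j : Fin (2 * m)) : ℝ :=
  if (j : ℕ) < m - 1 then -(1 / 2)
  else if (j : ℕ) = m - 1 then 1 / 2
  else if (j : ℕ) = m then -(1 / 2)
  else 1 / 2

/-- `ν_{0'}^w = w·a_{0'} − a_{0'}`. -/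
noncomputable def nu0' (m : ℕ) (t : VecZ m) (σ : Equiv.Perm (Fin (2 * m))) (j : Fin (2 * m)) : ℝ :=
  actR m t σ (a0' m) j - a0' m j

/-- `ν_{m'}^w = w·a_{m'} − a_{m'}`. -/
noncomputable def num' (m : ℕ) (t : VecZ m) (σ : Equiv.Perm (Fin (2 * m))) (j : Fin (2 * m)) : ℝ :=
  actR m t σ (am' m) j - am' m j

/-- membership in the real apartment `{x : x(1)+x(2m) = ⋯ = x(m)+x(m+1)}`. -/
def InApartR (m : ℕ) (x : VecR m) : Prop :=
  ∀ j j' : Fin (2 * m), x j + x j.rev = x j' + x j'.rev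

/-- membership in the base alcove `A_{D_m}`. -/
def InAlcove (m : ℕ) (x : VecR m) : Prop :=
  InApartR m x ∧
  (∀ j0 jt : Fin (2 * m), (j0 : ℕ) = 0 → 1 ≤ (jt : ℕ) → (jt : ℕ) ≤ m →
    x j0 < x jt ∧ x j0.rev - 1 < x jt) ∧
  (∀ j j' : Fin (2 * m), 1 ≤ (j : ℕ) → (j : ℕ) ≤ m - 2 → (j : ℕ) < (j' : ℕ) →
    (j' : ℕ) ≤ m → x j < x j')

/-- `w = t_t σ` is μ-permissible: `w ≡ t_μ mod W_{aff}` (equivalently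
`ν_0^w − μ ∈ Q∨_{D_m}`) and `w·x − x ∈ Conv(S_{2m}^∘ μ)` for all `x` in the base alcove. -/
def MuPermissible (m q : ℕ) (t : VecZ m) (σ : Equiv.Perm (Fin (2 * m))) : Prop :=
  NuCongQvee m q t σ 0 ∧
  ∀ x : VecR m, InAlcove m x → (fun j => actR m t σ x j - x j) ∈ ConvMu m q

/-- the coroot `α∨_{i,j} = e_i − e_j + e_{j*} − e_{i*}`. -/
def corootD (m : ℕ) (i j l : Fin (2 * m)) : ℤ :=
  (if l = i then 1 else 0) - (if l = j then 1 else 0) +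
    (if l = j.rev then 1 else 0) - (if l = i.rev then 1 else 0)

/-- `(t', σ')` represents `s_{α̃_{i,j;d}} · w` for `w = t_t σ`: on the apartment it
acts by `x ↦ w·x − ⟨α̃_{i,j;d}, w·x⟩ α∨_{i,j}`. -/
def IsReflOf (m : ℕ) (i j : Fin (2 * m)) (d : ℤ) (t : VecZ m) (σ : Equiv.Perm (Fin (2 * m)))
    (t' : VecZ m) (σ' : Equiv.Perm (Fin (2 * m))) : Prop :=
  ∀ x : VecR m, InApartR m x → ∀ l,
    actR m t' σ' x l =
      actR m t σ x l - (actR m t σ x i - actR m t σ x j - (d : ℝ)) * (corootD m i j l : ℝ)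

/-- Membership of `i` in `2mℤ ± I`. -/
def FaceIdxD (m : ℕ) (I : Finset ℕ) (i : ℤ) : Prop :=
  ∃ a ∈ I, ∃ b : ℤ, i = 2 * (m : ℤ) * b + (a : ℤ) ∨ i = 2 * (m : ℤ) * b - (a : ℤ)

/-- `v` is a `d`-face of type `(2m, I)`. -/
structure IsFaceD (m : ℕ) (I : Finset ℕ) (d : ℤ) (v : ℤ → VecZ m) : Prop where
  per : ∀ i, FaceIdxD m I i → ∀ j, v (i + 2 * (m : ℤ)) j = v i j - 1
  mono : ∀ i i', FaceIdxD m I i → FaceIdxD m I i' → i ≤ i' → ∀ j, v i' j ≤ v i j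
  sumEq : ∀ i i', FaceIdxD m I i → FaceIdxD m I i' → (∑ j, v i j) - (∑ j, v i' j) = i' - i
  dual : ∀ i, FaceIdxD m I i → ∀ j, v i j + v (-i) j.rev = d

/-- `μ_i^v := v_i − ω_i` for a face `v`. -/
def muFaceD (m : ℕ) (v : ℤ → VecZ m) (i : ℤ) (j : Fin (2 * m)) : ℤ := v i j - omegaD m i j

/-- `ε` of a translation vector: the sum of the first `m` entries mod 2. -/
def epsVec (m : ℕ) (x : VecZ m) : ZMod 2 :=
  ((∑ j ∈ Finset.univ.filter (fun j : Fin (2 * m) => (j : ℕ) < m), x j : ℤ) : ZMod 2)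

/-- membership of `(v, γ)` in `F_{I,D_m}`. -/
def MemFD (m : ℕ) (I : Finset ℕ) (v : ℤ → VecZ m) (γ : ZMod 2) : Prop :=
  (∃ d, IsFaceD m I d v) ∧
  (if 0 ∈ I then
    if m ∈ I then
      (fun j => muFaceD m v 0 j - muFaceD m v (m : ℤ) j) ∈ QveeD m ∧
        γ = epsVec m (fun j => muFaceD m v 0 j)
    else γ = epsVec m (fun j => muFaceD m v 0 j)
  else if m ∈ I then γ = epsVec m (fun j => muFaceD m v (m : ℤ) j)
  else True)

/-- membership of `t_tx σx` in `W_{I,D_m}` (the group conditions on `(tx, σx)` being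
assumed separately): it lies in `W_{aff,D_m}` and fixes `a_k` for all `k ∈ I`. -/
def MemWI (m : ℕ) (I : Finset ℕ) (tx : VecZ m) (σx : Equiv.Perm (Fin (2 * m))) : Prop :=
  tx ∈ QveeD m ∧ ∀ k ∈ I, ∀ j, (tx j : ℝ) + aD m k (σx⁻¹ j) = aD m k j

/-- (SP1) at `k` for a face. -/
def SP1F (m : ℕ) (v : ℤ → VecZ m) (k : ℕ) : Prop :=
  (∀ j, muFaceD m v (k : ℤ) j + muFaceD m v (-(k : ℤ)) j.rev = 2) ∧
  (∀ j, 0 ≤ muFaceD m v (k : ℤ) j ∧ muFaceD m v (k : ℤ) j ≤ 2)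

/-- (SP2) at `k` for a face. -/
def SP2F (m q : ℕ) (v : ℤ → VecZ m) (k : ℕ) : Prop :=
  Set.ncard {j : Fin (2 * m) | muFaceD m v (k : ℤ) j = 2} ≤ q

/-- (SP3) at `k` for a face. -/
def SP3F (m q : ℕ) (v : ℤ → VecZ m) (k : ℕ) : Prop :=
  ((∀ j, muFaceD m v (k : ℤ) j = muFaceD m v (-(k : ℤ)) j) ∧
      (fun j => muFaceD m v (k : ℤ) j - muQ m q j) ∉ QveeD m) →
    ∃ j₁ j₂ : Fin (2 * m), memA m k j₁ ∧ memB m k j₂ ∧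
      muFaceD m v (k : ℤ) j₁ = 1 ∧ muFaceD m v (k : ℤ) j₂ = 1

/-- `(v, γ) ∈ F_{I,D_m}` is μ-spin-permissible. -/
def SpinPermF (m q : ℕ) (I : Finset ℕ) (v : ℤ → VecZ m) (γ : ZMod 2) : Prop :=
  γ = epsVec m (fun j => muQ m q j) ∧ ∀ k ∈ I, SP1F m v k ∧ SP2F m q v k ∧ SP3F m q v k


section Helpers
variable {m k : ℕ} {t : VecZ m} {σ : Equiv.Perm (Fin (2 * m))}

/-- indicator of membership in `A_k` -/
def chiA (m k : ℕ) (j : Fin (2 * m)) : ℤ :=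
  (if (j : ℕ) < k then 1 else 0) + (if 2 * m - k ≤ (j : ℕ) then 1 else 0)

lemma chiA_mem (hk : k ≤ m) (j : Fin (2 * m)) : chiA m k j = 0 ∨ chiA m k j = 1 := by
  have hj := j.isLt
  unfold chiA; split_ifs <;> omega

lemma omega_nat (hk : k ≤ m) (j : Fin (2 * m)) :
    omegaD m (k : ℤ) j = if (j : ℕ) < k then -1 else 0 := by
  have hj := j.isLt
  have h0 : (0:ℤ) ≤ (k:ℤ) := Int.ofNat_nonneg k
  have h1 : (k:ℤ) < 2 * (m:ℤ) := by exact_mod_cast (by omega : k < 2*m)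
  unfold omegaD
  rw [Int.emod_eq_of_lt h0 h1, Int.ediv_eq_zero_of_lt h0 h1]
  simp only [Nat.cast_lt, neg_zero, zero_sub]

lemma omega_neg (hk : k ≤ m) (hm : 1 ≤ m) (j : Fin (2 * m)) :
    omegaD m (-(k : ℤ)) j = if 2 * m - k ≤ (j : ℕ) then 1 else 0 := by
  have hj := j.isLt
  rcases Nat.eq_zero_or_pos k with rfl | hkpos
  · unfold omegaD
    norm_num
    omega
  · have h2m : (0:ℤ) < 2 * (m:ℤ) := by positivity
    have hk' : (k:ℤ) ≤ (m:ℤ) := by exact_mod_cast hk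
    have hkp' : (0:ℤ) < (k:ℤ) := by exact_mod_cast hkpos
    have key : (-(k:ℤ)) = (2*(m:ℤ) - k) + (2*(m:ℤ)) * (-1) := by ring
    have hr0 : (0:ℤ) ≤ 2*(m:ℤ) - k := by omega
    have hr1 : 2*(m:ℤ) - k < 2*(m:ℤ) := by omega
    have hmod : (-(k:ℤ)) % (2*(m:ℤ)) = 2*(m:ℤ) - k := by
      rw [key, Int.add_mul_emod_self_left, Int.emod_eq_of_lt hr0 hr1]
    have hdiv : (-(k:ℤ)) / (2*(m:ℤ)) = -1 := by
      rw [key, Int.add_mul_ediv_left _ _ (ne_of_gt h2m), Int.ediv_eq_zero_of_lt hr0 hr1]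
      norm_num
    unfold omegaD
    rw [hmod, hdiv]
    split_ifs <;> omega

lemma sigma_inv_rev (hσ : InSO m σ) (j : Fin (2 * m)) :
    σ⁻¹ j.rev = (σ⁻¹ j).rev := by
  apply σ.injective
  rw [show ∀ x, σ (σ⁻¹ x) = x from fun x => σ.apply_symm_apply x, hσ.2,
    show ∀ x, σ (σ⁻¹ x) = x from fun x => σ.apply_symm_apply x]

lemma mu_neg (hk : k ≤ m) (hm : 1 ≤ m) (hσ : InSO m σ) (j : Fin (2 * m)) :
    muD m t σ (-(k : ℤ)) j = (t j + t j.rev) - muD m t σ (k : ℤ) j.rev := by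
  unfold muD
  rw [sigma_inv_rev hσ, omega_neg hk hm, omega_neg hk hm,
    omega_nat hk, omega_nat hk]
  have hj := j.isLt
  have hj' := (σ⁻¹ j).isLt
  simp only [Fin.val_rev]
  split_ifs <;> omega

lemma mu_pair (hk : k ≤ m) (hσ : InSO m σ) (j : Fin (2 * m)) :
    muD m t σ (k : ℤ) j + muD m t σ (k : ℤ) j.rev
      = (t j + t j.rev) - chiA m k (σ⁻¹ j) + chiA m k j := by
  unfold muD chiA
  rw [sigma_inv_rev hσ, omega_nat hk, omega_nat hk, omega_nat hk, omega_nat hk]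
  have hj := j.isLt
  have hj' := (σ⁻¹ j).isLt
  simp only [Fin.val_rev]
  split_ifs <;> omega

lemma isIntVal_div_two (a : ℤ) : IsIntVal ((a : ℝ) / 2) ↔ (2:ℤ) ∣ a := by
  constructor
  · rintro ⟨z, hz⟩
    refine ⟨z, ?_⟩
    have : (a : ℝ) = 2 * (z:ℝ) := by linarith
    exact_mod_cast this
  · rintro ⟨z, rfl⟩
    exact ⟨z, by push_cast; ring⟩

lemma ncard_filter_eq {n : ℕ} (P : Fin n → Prop) [DecidablePred P] :
    Set.ncard {j | P j} = (Finset.univ.filter P).card := by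
  rw [← Set.ncard_coe_finset]
  congr 1
  ext j
  simp

lemma filter_card_split {n : ℕ} (P Q : Fin n → Prop) [DecidablePred P] [DecidablePred Q] :
    (univ.filter P).card
      = (univ.filter fun j => P j ∧ Q j).card + (univ.filter fun j => P j ∧ ¬ Q j).card := by
  have h1 : univ.filter P
      = (univ.filter fun j => P j ∧ Q j) ∪ (univ.filter fun j => P j ∧ ¬ Q j) := by
    ext j; simp only [mem_filter, mem_union, mem_univ, true_and]; tauto
  rw [h1, card_union_of_disjoint]
  rw [Finset.disjoint_left]
  intro a ha hb
  simp only [mem_filter, mem_univ, true_and] at ha hb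
  tauto

lemma filter_card_comp {n : ℕ} (σ : Equiv.Perm (Fin n)) (P : Fin n → Prop) [DecidablePred P] :
    (univ.filter fun j => P (σ⁻¹ j)).card = (univ.filter P).card := by
  refine Finset.card_equiv σ⁻¹ (fun i => ?_)
  simp

lemma filter_card_rev {n : ℕ} (P : Fin n → Prop) [DecidablePred P] :
    (univ.filter fun j : Fin n => P j.rev).card = (univ.filter P).card := by
  refine Finset.card_equiv Fin.revPerm (fun i => ?_)
  simp

end Helpers

theorem statement9 (m q : ℕ) (hm : 2 ≤ m) (hq : q ≤ m - 1)
    (t : VecZ m) (σ : Equiv.Perm (Fin (2 * m))) (ht : InXD m t) (hσ : InSO m σ)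
    (k : ℕ) (hk : k ≤ m) :
    (SP1 m t σ (k : ℤ) ↔ SP1' m t σ (k : ℤ)) ∧
    (SP1 m t σ (k : ℤ) → (SP2 m q t σ (k : ℤ) ↔ SP2' m q t σ (k : ℤ))) ∧
    (SP3 m q t σ k ↔ SP3' m q t σ k) := by
  classical
  have hm1 : 1 ≤ m := by omega
  have hdual : ∀ j, muD m t σ (-(k:ℤ)) j = (t j + t j.rev) - muD m t σ (k:ℤ) j.rev :=
    fun j => mu_neg hk hm1 hσ j
  have hpair : ∀ j, muD m t σ (k:ℤ) j + muD m t σ (k:ℤ) j.rev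
      = (t j + t j.rev) - chiA m k (σ⁻¹ j) + chiA m k j := fun j => mu_pair hk hσ j
  have hchi : ∀ j : Fin (2*m), chiA m k j = 0 ∨ chiA m k j = 1 := chiA_mem hk
  have hnuC : ∀ j, ∃ C : ℤ, nuD m t σ (k:ℤ) j = (C:ℝ)/2 ∧
      C = muD m t σ (k:ℤ) j + (t j + t j.rev) - muD m t σ (k:ℤ) j.rev := by
    intro j
    refine ⟨muD m t σ (k:ℤ) j + (t j + t j.rev) - muD m t σ (k:ℤ) j.rev, ?_, rfl⟩
    unfold nuD
    rw [hdual j]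
    push_cast
    ring_nf
  have hnupair : ∀ j, nuD m t σ (k:ℤ) j + nuD m t σ (k:ℤ) j.rev = ((t j + t j.rev : ℤ) : ℝ) := by
    intro j
    obtain ⟨C, hC1, hC2⟩ := hnuC j
    obtain ⟨D, hD1, hD2⟩ := hnuC j.rev
    rw [hC1, hD1, hC2, hD2, Fin.rev_rev]
    push_cast
    ring
  have hS2_SP1 : (∀ j, muD m t σ (k:ℤ) j + muD m t σ (-(k:ℤ)) j.rev = 2)
      ↔ (∀ j, t j + t j.rev = 2) := by
    constructor
    · intro h j
      have h1 := h j
      rw [hdual j.rev, Fin.rev_rev] at h1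
      omega
    · intro h j
      rw [hdual j.rev, Fin.rev_rev]
      have := h j.rev
      have h2 := h j
      omega
  have hS2_SP1' : (∀ j, nuD m t σ (k:ℤ) j + nuD m t σ (k:ℤ) j.rev = 2)
      ↔ (∀ j, t j + t j.rev = 2) := by
    constructor
    · intro h j
      have h1 := h j
      rw [hnupair j] at h1
      exact_mod_cast h1
    · intro h j
      rw [hnupair j, h j]
      norm_num
  have hC_form : ∀ j, muD m t σ (k:ℤ) j + (t j + t j.rev) - muD m t σ (k:ℤ) j.rev
      = 2 * muD m t σ (k:ℤ) j + chiA m k (σ⁻¹ j) - chiA m k j := by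
    intro j
    have := hpair j
    omega
  have hint_iff : ∀ j, IsIntVal (nuD m t σ (k:ℤ) j) ↔ chiA m k (σ⁻¹ j) = chiA m k j := by
    intro j
    obtain ⟨C, hC1, hC2⟩ := hnuC j
    rw [hC1, isIntVal_div_two]
    have h1 := hC_form j
    rcases hchi j with h2 | h2 <;> rcases hchi (σ⁻¹ j) with h3 | h3 <;> omega
  -- Part (i)
  have part1 : SP1 m t σ (k:ℤ) ↔ SP1' m t σ (k:ℤ) := by
    constructor
    · rintro ⟨h1, h2⟩
      have hS2 := hS2_SP1.mp h1
      refine ⟨hS2_SP1'.mpr hS2, fun j => ?_⟩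
      obtain ⟨C, hC1, hC2⟩ := hnuC j
      rw [hC1]
      have a1 := (h2 j).1
      have a2 := (h2 j).2
      have b1 := (h2 j.rev).1
      have b2 := (h2 j.rev).2
      have hs := hS2 j
      have d1 : (0:ℤ) ≤ C := by omega
      have d2 : C ≤ 4 := by omega
      have d1' : (0:ℝ) ≤ (C:ℝ) := by exact_mod_cast d1
      have d2' : (C:ℝ) ≤ 4 := by exact_mod_cast d2
      constructor <;> linarith
    · rintro ⟨h1, h2⟩
      have hS2 := hS2_SP1'.mp h1
      refine ⟨hS2_SP1.mpr hS2, fun j => ?_⟩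
      obtain ⟨C, hC1, hC2⟩ := hnuC j
      have c1 := (h2 j).1
      have c2 := (h2 j).2
      rw [hC1] at c1 c2
      have d1 : (0:ℤ) ≤ C := by
        have : (0:ℝ) ≤ (C:ℝ) := by linarith
        exact_mod_cast this
      have d2 : C ≤ 4 := by
        have : (C:ℝ) ≤ 4 := by linarith
        exact_mod_cast this
      have hp := hpair j
      have hs := hS2 j
      rcases hchi j with h3 | h3 <;> rcases hchi (σ⁻¹ j) with h4 | h4 <;> omega
  -- Part (ii)
  have part2 : SP1 m t σ (k:ℤ) → (SP2 m q t σ (k:ℤ) ↔ SP2' m q t σ (k:ℤ)) := by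
    rintro ⟨h1, hb⟩
    have hS2 := hS2_SP1.mp h1
    -- per element characterizations
    have hnu2 : ∀ j, nuD m t σ (k:ℤ) j = 2
        ↔ (muD m t σ (k:ℤ) j = 2 ∧ muD m t σ (k:ℤ) j.rev = 0) := by
      intro j
      obtain ⟨C, hC1, hC2⟩ := hnuC j
      rw [hC1]
      have hs := hS2 j
      have a1 := (hb j).1
      have a2 := (hb j).2
      have b1 := (hb j.rev).1
      have b2 := (hb j.rev).2
      constructor
      · intro h
        have : (C:ℝ) = 4 := by linarith
        have : C = 4 := by exact_mod_cast this
        omega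
      · intro h
        have : C = 4 := by omega
        rw [this]
        norm_num
    have hnotint : ∀ j, ¬ IsIntVal (nuD m t σ (k:ℤ) j)
        ↔ (muD m t σ (k:ℤ) j + muD m t σ (k:ℤ) j.rev = 1
            ∨ muD m t σ (k:ℤ) j + muD m t σ (k:ℤ) j.rev = 3) := by
      intro j
      rw [hint_iff j]
      have hp := hpair j
      have hs := hS2 j
      have a1 := (hb j).1
      have a2 := (hb j).2
      have b1 := (hb j.rev).1
      have b2 := (hb j.rev).2
      rcases hchi j with h3 | h3 <;> rcases hchi (σ⁻¹ j) with h4 | h4 <;> omega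
    -- finset cardinalities
    have hcD : (univ.filter fun j => muD m t σ (k:ℤ) j = 2).card
        = (univ.filter fun j => muD m t σ (k:ℤ) j = 2 ∧ muD m t σ (k:ℤ) j.rev = 0).card
          + (univ.filter fun j => muD m t σ (k:ℤ) j = 2 ∧ muD m t σ (k:ℤ) j.rev = 1).card := by
      rw [filter_card_split (fun j => muD m t σ (k:ℤ) j = 2)
        (fun j => muD m t σ (k:ℤ) j.rev = 0)]
      congr 1
      congr 1
      ext a
      simp only [mem_filter, mem_univ, true_and]
      have hs := hS2 a
      have hp := hpair a
      have a1 := (hb a).1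
      have a2 := (hb a).2
      have b1 := (hb a.rev).1
      have b2 := (hb a.rev).2
      rcases hchi a with h3 | h3 <;> rcases hchi (σ⁻¹ a) with h4 | h4 <;> omega
    have hNH : (univ.filter fun j => ¬ IsIntVal (nuD m t σ (k:ℤ) j)).card
        = (univ.filter fun j => muD m t σ (k:ℤ) j + muD m t σ (k:ℤ) j.rev = 1).card
          + (univ.filter fun j => muD m t σ (k:ℤ) j + muD m t σ (k:ℤ) j.rev = 3).card := by
      have he : univ.filter (fun j => ¬ IsIntVal (nuD m t σ (k:ℤ) j))
          = (univ.filter fun j => muD m t σ (k:ℤ) j + muD m t σ (k:ℤ) j.rev = 1)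
            ∪ (univ.filter fun j => muD m t σ (k:ℤ) j + muD m t σ (k:ℤ) j.rev = 3) := by
        ext a
        simp only [mem_filter, mem_union, mem_univ, true_and]
        exact hnotint a
      rw [he, card_union_of_disjoint]
      rw [Finset.disjoint_left]
      intro a h1 h2
      simp only [mem_filter, mem_univ, true_and] at h1 h2
      omega
    have e3 : (univ.filter fun j => muD m t σ (k:ℤ) j + muD m t σ (k:ℤ) j.rev = 3)
        = univ.filter (fun j => chiA m k j = 1 ∧ ¬ chiA m k (σ⁻¹ j) = 1) := by
      ext a
      simp only [mem_filter, mem_univ, true_and]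
      have hs := hS2 a
      have hp := hpair a
      rcases hchi a with h3 | h3 <;> rcases hchi (σ⁻¹ a) with h4 | h4 <;> omega
    have e1 : (univ.filter fun j => muD m t σ (k:ℤ) j + muD m t σ (k:ℤ) j.rev = 1)
        = univ.filter (fun j => chiA m k (σ⁻¹ j) = 1 ∧ ¬ chiA m k j = 1) := by
      ext a
      simp only [mem_filter, mem_univ, true_and]
      have hs := hS2 a
      have hp := hpair a
      rcases hchi a with h3 | h3 <;> rcases hchi (σ⁻¹ a) with h4 | h4 <;> omega
    have hS1S3 : (univ.filter fun j => muD m t σ (k:ℤ) j + muD m t σ (k:ℤ) j.rev = 1).card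
        = (univ.filter fun j => muD m t σ (k:ℤ) j + muD m t σ (k:ℤ) j.rev = 3).card := by
      rw [e1, e3]
      have c1 := filter_card_split (fun j : Fin (2*m) => chiA m k j = 1)
        (fun j => chiA m k (σ⁻¹ j) = 1)
      have c2 := filter_card_split (fun j : Fin (2*m) => chiA m k (σ⁻¹ j) = 1)
        (fun j => chiA m k j = 1)
      have c3 := filter_card_comp σ (fun j : Fin (2*m) => chiA m k j = 1)
      have c4 : univ.filter (fun j : Fin (2*m) => chiA m k (σ⁻¹ j) = 1 ∧ chiA m k j = 1)
          = univ.filter (fun j : Fin (2*m) => chiA m k j = 1 ∧ chiA m k (σ⁻¹ j) = 1) := by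
        ext a
        simp only [mem_filter, mem_univ, true_and]
        tauto
      rw [c4] at c2
      omega
    have hS3B : (univ.filter fun j => muD m t σ (k:ℤ) j + muD m t σ (k:ℤ) j.rev = 3).card
        = (univ.filter fun j => muD m t σ (k:ℤ) j = 2 ∧ muD m t σ (k:ℤ) j.rev = 1).card
          + (univ.filter fun j => muD m t σ (k:ℤ) j = 2 ∧ muD m t σ (k:ℤ) j.rev = 1).card := by
      rw [filter_card_split (fun j => muD m t σ (k:ℤ) j + muD m t σ (k:ℤ) j.rev = 3)
        (fun j => muD m t σ (k:ℤ) j = 2)]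
      congr 1
      · congr 1
        ext a
        simp only [mem_filter, mem_univ, true_and]
        have a1 := (hb a).1
        have a2 := (hb a).2
        have b1 := (hb a.rev).1
        have b2 := (hb a.rev).2
        omega
      · have e5 : (univ.filter fun j => muD m t σ (k:ℤ) j + muD m t σ (k:ℤ) j.rev = 3
            ∧ ¬ muD m t σ (k:ℤ) j = 2)
            = univ.filter (fun j : Fin (2*m) =>
                (fun i : Fin (2*m) => muD m t σ (k:ℤ) i = 2 ∧ muD m t σ (k:ℤ) i.rev = 1) j.rev) := by
          ext a
          simp only [mem_filter, mem_univ, true_and, Fin.rev_rev]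
          have a1 := (hb a).1
          have a2 := (hb a).2
          have b1 := (hb a.rev).1
          have b2 := (hb a.rev).2
          omega
        rw [e5]
        exact filter_card_rev (fun i : Fin (2*m) => muD m t σ (k:ℤ) i = 2 ∧ muD m t σ (k:ℤ) i.rev = 1)
    have eA : (univ.filter fun j => nuD m t σ (k:ℤ) j = 2).card
        = (univ.filter fun j => muD m t σ (k:ℤ) j = 2 ∧ muD m t σ (k:ℤ) j.rev = 0).card := by
      congr 1
      ext a
      simp only [mem_filter, mem_univ, true_and]
      exact hnu2 a
    unfold SP2 SP2' cD
    rw [ncard_filter_eq, ncard_filter_eq, ncard_filter_eq, hcD, eA]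
    have hfin : (univ.filter fun j => ¬ IsIntVal (nuD m t σ (k:ℤ) j)).card
        = 4 * (univ.filter fun j => muD m t σ (k:ℤ) j = 2 ∧ muD m t σ (k:ℤ) j.rev = 1).card := by
      omega
    rw [hfin]
    push_cast
    constructor
    · intro h
      have h' : ((univ.filter fun j => muD m t σ (k:ℤ) j = 2 ∧ muD m t σ (k:ℤ) j.rev = 0).card : ℝ)
          + (univ.filter fun j => muD m t σ (k:ℤ) j = 2 ∧ muD m t σ (k:ℤ) j.rev = 1).card
          ≤ (q:ℝ) := by exact_mod_cast h
      linarith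
    · intro h
      have h' : ((univ.filter fun j => muD m t σ (k:ℤ) j = 2 ∧ muD m t σ (k:ℤ) j.rev = 0).card : ℝ)
          + (univ.filter fun j => muD m t σ (k:ℤ) j = 2 ∧ muD m t σ (k:ℤ) j.rev = 1).card
          ≤ (q:ℝ) := by linarith
      exact_mod_cast h'
  have hsd_iff : ∀ j, muD m t σ (k:ℤ) j = muD m t σ (-(k:ℤ)) j
      ↔ chiA m k (σ⁻¹ j) = chiA m k j := by
    intro j
    rw [hdual j]
    have hp := hpair j
    rcases hchi j with h3 | h3 <;> rcases hchi (σ⁻¹ j) with h4 | h4 <;> omega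
  have part3 : SP3 m q t σ k ↔ SP3' m q t σ k := by
    by_cases hsd : SelfDual m t σ (k:ℤ)
    · have hnueq : ∀ j, nuD m t σ (k:ℤ) j = ((muD m t σ (k:ℤ) j : ℤ) : ℝ) := by
        intro j
        unfold nuD
        rw [← hsd j]
        push_cast
        ring
      have hint : ∀ j, IsIntVal (nuD m t σ (k:ℤ) j) := fun j => ⟨_, hnueq j⟩
      have hcong : ((fun j => muD m t σ (k:ℤ) j - muQ m q j) ∈ QveeD m)
          ↔ NuCongQvee m q t σ (k:ℤ) := by
        constructor
        · intro h
          refine ⟨fun j => muD m t σ (k:ℤ) j - muQ m q j, h, fun j => ?_⟩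
          rw [hnueq j]
          push_cast
          ring
        · rintro ⟨y, hy, hyy⟩
          have he : (fun j => muD m t σ (k:ℤ) j - muQ m q j) = y := by
            funext j
            have h1 := hyy j
            rw [hnueq j] at h1
            have h2 : muD m t σ (k:ℤ) j = muQ m q j + y j := by exact_mod_cast h1
            omega
          rw [he]
          exact hy
      constructor
      · rintro h ⟨_, hnc⟩
        obtain ⟨j₁, j₂, hj1, hj2, hm1', hm2'⟩ := h ⟨hsd, fun hmem => hnc (hcong.mp hmem)⟩
        exact ⟨j₁, j₂, hj1, hj2, by rw [hnueq]; exact_mod_cast hm1',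
          by rw [hnueq]; exact_mod_cast hm2'⟩
      · rintro h ⟨_, hnmem⟩
        obtain ⟨j₁, j₂, hj1, hj2, hn1, hn2⟩ := h ⟨hint, fun hc => hnmem (hcong.mpr hc)⟩
        refine ⟨j₁, j₂, hj1, hj2, ?_, ?_⟩
        · rw [hnueq j₁] at hn1
          exact_mod_cast hn1
        · rw [hnueq j₂] at hn2
          exact_mod_cast hn2
    · constructor
      · rintro _ ⟨hintall, _⟩
        exfalso
        exact hsd (fun j => (hsd_iff j).mpr ((hint_iff j).mp (hintall j)))
      · rintro _ ⟨hsd', _⟩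
        exact absurd hsd' hsd
  exact ⟨part1, part2, part3⟩



end TypeD
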